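/- For any finite connected graph G on n vertices, there is a choice-random-walk strategy such that the maximum expected hitting time between any two vertices is less than 3·|E(G)|, and also less than n². -/

import Mathlib

open scoped ENNReal

/-- `qv` is a one-step transition distribution of the choice random walk at vertex `v`:
there are pairwise preference probabilities `α i j ∈ [0,1]` (with `α j i = 1 - α i j`) for
the neighbours of `v`, and the probability of stepping to a neighbour `i` is
`2 (∑_{j ∈ Γ(v)} α i j) / deg(v)²`. -/
def IsCRWStep {V : Type*} [Fintype V] [DecidableEq V] (G : SimpleGraph V)
    [DecidableRel G.Adj] (v : V) (qv : V → ℝ) : Prop :=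
  ∃ α : V → V → ℝ,
    (∀ i ∈ G.neighborFinset v, ∀ j ∈ G.neighborFinset v,
      0 ≤ α i j ∧ α i j ≤ 1 ∧ α j i = 1 - α i j) ∧
    ∀ i, qv i = if i ∈ G.neighborFinset v then
      (2 * ∑ j ∈ G.neighborFinset v, α i j) / ((G.degree v : ℝ)) ^ 2 else 0

/-- The optimal expected time for the choice random walk started at `u` to reach the set
`S`, defined as the least value `h u` over all systems of expected-hitting-time values
`h : V → ℝ≥0∞` solving the one-step (Bellman) equations for some choice strategy. -/
noncomputable def crwHitTime {V : Type*} [Fintype V] [DecidableEq V] (G : SimpleGraph V)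
    [DecidableRel G.Adj] (u : V) (S : Set V) : ℝ≥0∞ :=
  sInf {x : ℝ≥0∞ | ∃ h : V → ℝ≥0∞, x = h u ∧ (∀ v ∈ S, h v = 0) ∧
    ∀ v ∉ S, ∃ qv : V → ℝ, IsCRWStep G v qv ∧
      h v = 1 + ∑ w, ENNReal.ofReal (qv w) * h w}

open Finset
open scoped ENNReal
set_option linter.unusedSectionVars false

namespace CRWAux

variable {V : Type*} [Fintype V] [DecidableEq V] (G : SimpleGraph V) [DecidableRel G.Adj]
  (y : V)

/-- distance level to the target `y`. -/
noncomputable def lv (v : V) : ℕ := G.dist v y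

/-- geometric weight scale. -/
noncomputable def pw (k : ℕ) : ℝ := (2:ℝ)⁻¹ ^ k

lemma pw_pos (k : ℕ) : 0 < pw k := by unfold pw; positivity

lemma pw_le_one (k : ℕ) : pw k ≤ 1 := by
  unfold pw
  exact pow_le_one₀ (by norm_num) (by norm_num)

lemma pw_succ (k : ℕ) : pw k = 2 * pw (k+1) := by
  unfold pw; rw [pow_succ]; ring

lemma pw_mul_two_pow (k : ℕ) : pw k * 2^k = 1 := by
  unfold pw
  rw [← mul_pow]
  norm_num

variable {G y}

lemma lv_y : lv G y y = 0 := by simp [lv, SimpleGraph.dist_self]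

lemma lv_pos (hconn : G.Connected) {v : V} (hv : v ≠ y) : 0 < lv G y v :=
  (hconn v y).pos_dist_of_ne hv

lemma eq_y_of_lv_eq_zero (hconn : G.Connected) {v : V} (h : lv G y v = 0) : v = y := by
  by_contra hv
  exact absurd h (lv_pos hconn hv).ne'

lemma lv_adj (hconn : G.Connected) {a b : V} (h : G.Adj a b) : lv G y a ≤ lv G y b + 1 := by
  have h1 : G.dist a b ≤ 1 := by
    have := SimpleGraph.dist_le (SimpleGraph.Walk.cons h SimpleGraph.Walk.nil)
    simpa using this
  calc G.dist a y ≤ G.dist a b + G.dist b y := hconn.dist_triangle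
    _ ≤ 1 + G.dist b y := by omega
    _ = G.dist b y + 1 := by omega

lemma exists_adj (hconn : G.Connected) [Nontrivial V] (v : V) : ∃ u, G.Adj v u := by
  obtain ⟨u, hu⟩ := exists_ne v
  obtain ⟨p⟩ := hconn v u
  cases p with
  | nil => exact absurd rfl hu
  | cons h _ => exact ⟨_, h⟩

lemma degree_pos (hconn : G.Connected) [Nontrivial V] (v : V) : 0 < G.degree v := by
  obtain ⟨u, hu⟩ := exists_adj hconn v
  exact Finset.card_pos.mpr ⟨u, (G.mem_neighborFinset v u).mpr hu⟩

lemma exists_down (hconn : G.Connected) {v : V} (hv : v ≠ y) :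
    ∃ u, G.Adj v u ∧ lv G y u + 1 = lv G y v := by
  obtain ⟨p, hp⟩ := hconn.exists_walk_length_eq_dist v y
  cases p with
  | nil => exact absurd rfl hv
  | @cons _ w _ h q =>
      refine ⟨w, h, ?_⟩
      have h1 : G.dist w y ≤ q.length := SimpleGraph.dist_le q
      have h2 : q.length + 1 = G.dist v y := by simpa using hp
      have h3 : G.dist v y ≤ G.dist w y + 1 := lv_adj hconn h
      simp only [lv]
      omega

variable (G y)

/-- a fixed choice of a down-neighbour ("parent") of each non-target vertex. -/
noncomputable def pa (hconn : G.Connected) (v : V) : V :=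
  if h : v = y then v else (exists_down hconn h).choose

variable {G y}

lemma pa_spec (hconn : G.Connected) {v : V} (hv : v ≠ y) :
    G.Adj v (pa G y hconn v) ∧ lv G y (pa G y hconn v) + 1 = lv G y v := by
  rw [pa, dif_neg hv]
  exact (exists_down hconn hv).choose_spec


variable (G y)

/-- edge weights `2^{-min(level)}`. -/
noncomputable def Wt (a b : V) : ℝ := if G.Adj a b then pw (min (lv G y a) (lv G y b)) else 0

/-- inverse edge weights (resistances). -/
noncomputable def iw (a b : V) : ℝ := if G.Adj a b then (pw (min (lv G y a) (lv G y b)))⁻¹ else 0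

/-- weighted degree. -/
noncomputable def dw (v : V) : ℝ := ∑ b, Wt G y v b

/-- number of down-neighbours. -/
noncomputable def md (v : V) : ℕ :=
  ((G.neighborFinset v).filter (fun b => lv G y b < lv G y v)).card

/-- transition probabilities of the biased walk. -/
noncomputable def qs (v b : V) : ℝ := Wt G y v b / dw G y v

variable {G y}

lemma Wt_nonneg (a b : V) : 0 ≤ Wt G y a b := by
  unfold Wt; split
  · exact (pw_pos _).le
  · exact le_refl 0

lemma Wt_symm (a b : V) : Wt G y a b = Wt G y b a := by
  unfold Wt
  rw [min_comm]
  by_cases h : G.Adj a b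
  · rw [if_pos h, if_pos h.symm]
  · rw [if_neg h, if_neg (fun hb => h hb.symm)]

lemma Wt_of_not_adj {a b : V} (h : ¬ G.Adj a b) : Wt G y a b = 0 := if_neg h

lemma iw_nonneg (a b : V) : 0 ≤ iw G y a b := by
  unfold iw; split
  · exact (inv_nonneg.mpr (pw_pos _).le)
  · exact le_refl 0

lemma Wt_eq (hconn : G.Connected) {v b : V} (h : G.Adj v b) :
    Wt G y v b = (if lv G y b < lv G y v then 2 else 1) * pw (lv G y v) := by
  unfold Wt
  rw [if_pos h]
  by_cases hd : lv G y b < lv G y v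
  · rw [if_pos hd, min_eq_right hd.le]
    have h1 : lv G y v ≤ lv G y b + 1 := lv_adj hconn h
    have h2 : lv G y b + 1 = lv G y v := by omega
    rw [← h2, pw_succ]
  · rw [if_neg hd, min_eq_left (not_lt.mp hd), one_mul]

lemma dw_eq_sum_nbrs (v : V) : dw G y v = ∑ b ∈ G.neighborFinset v, Wt G y v b := by
  unfold dw
  refine (Finset.sum_subset (Finset.subset_univ _) ?_).symm
  intro b _ hb
  exact Wt_of_not_adj (fun h => hb ((G.mem_neighborFinset v b).mpr h))

lemma dw_eq (hconn : G.Connected) (v : V) :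
    dw G y v = ((G.degree v : ℝ) + (md G y v : ℝ)) * pw (lv G y v) := by
  rw [dw_eq_sum_nbrs]
  rw [Finset.sum_congr rfl (fun b hb => Wt_eq hconn ((G.mem_neighborFinset v b).mp hb))]
  rw [← Finset.sum_filter_add_sum_filter_not (G.neighborFinset v)
    (fun b => lv G y b < lv G y v)]
  have h1 : ∀ b ∈ (G.neighborFinset v).filter (fun b => lv G y b < lv G y v),
      (if lv G y b < lv G y v then (2:ℝ) else 1) * pw (lv G y v) = 2 * pw (lv G y v) := by
    intro b hb
    rw [if_pos (Finset.mem_filter.mp hb).2]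
  have h2 : ∀ b ∈ (G.neighborFinset v).filter (fun b => ¬ lv G y b < lv G y v),
      (if lv G y b < lv G y v then (2:ℝ) else 1) * pw (lv G y v) = 1 * pw (lv G y v) := by
    intro b hb
    rw [if_neg (Finset.mem_filter.mp hb).2]
  rw [Finset.sum_congr rfl h1, Finset.sum_congr rfl h2, Finset.sum_const, Finset.sum_const]
  have hcard : ((G.neighborFinset v).filter (fun b => ¬ lv G y b < lv G y v)).card
      = G.degree v - md G y v := by
    unfold md SimpleGraph.degree
    rw [← Finset.card_filter_add_card_filter_not
      (s := G.neighborFinset v) (p := fun b => lv G y b < lv G y v)]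
    omega
  rw [hcard]
  have hle : #(Finset.filter (fun b => lv G y b < lv G y v) (G.neighborFinset v)) ≤ G.degree v :=
    Finset.card_filter_le _ _
  unfold md
  rw [nsmul_eq_mul, nsmul_eq_mul, Nat.cast_sub hle]
  push_cast
  ring

lemma md_le_degree (v : V) : md G y v ≤ G.degree v := Finset.card_filter_le _ _

lemma md_pos (hconn : G.Connected) {v : V} (hv : v ≠ y) : 0 < md G y v := by
  obtain ⟨hadj, hlv⟩ := pa_spec hconn hv
  refine Finset.card_pos.mpr ⟨pa G y hconn v, Finset.mem_filter.mpr ⟨?_, by omega⟩⟩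
  exact (G.mem_neighborFinset _ _).mpr hadj

lemma dw_pos (hconn : G.Connected) [Nontrivial V] (v : V) : 0 < dw G y v := by
  rw [dw_eq hconn]
  have h1 := degree_pos hconn v
  have := pw_pos (lv G y v)
  positivity

lemma dw_nonneg (v : V) : 0 ≤ dw G y v := Finset.sum_nonneg (fun b _ => Wt_nonneg v b)

lemma qs_nonneg (v b : V) : 0 ≤ qs G y v b := by
  unfold qs
  exact div_nonneg (Wt_nonneg _ _) (dw_nonneg v)

lemma qs_of_not_adj {v b : V} (h : ¬ G.Adj v b) : qs G y v b = 0 := by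
  unfold qs; rw [Wt_of_not_adj h, zero_div]

lemma qs_sum_nbrs (hconn : G.Connected) [Nontrivial V] (v : V) :
    ∑ b ∈ G.neighborFinset v, qs G y v b = 1 := by
  unfold qs
  rw [← Finset.sum_div, ← dw_eq_sum_nbrs, div_self (dw_pos hconn v).ne']

lemma abs_qs_diff (hconn : G.Connected) [Nontrivial V] {v : V} (hv : v ≠ y)
    {i j : V} (hi : G.Adj v i) (hj : G.Adj v j) :
    (G.degree v : ℝ) * |qs G y v i - qs G y v j| ≤ 1 := by
  have hdw := dw_pos (G := G) (y := y) hconn v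
  have hWd : ∀ b, G.Adj v b → pw (lv G y v) ≤ Wt G y v b ∧ Wt G y v b ≤ 2 * pw (lv G y v) := by
    intro b hb
    rw [Wt_eq hconn hb]
    have := pw_pos (lv G y v)
    split <;> constructor <;> nlinarith
  have hWi := hWd i hi
  have hWj := hWd j hj
  have hdd : (G.degree v : ℝ) * pw (lv G y v) ≤ dw G y v := by
    rw [dw_eq hconn]
    have := pw_pos (lv G y v)
    have : (0:ℝ) ≤ (md G y v : ℝ) := Nat.cast_nonneg _
    nlinarith [pw_pos (lv G y v)]
  have hq : |qs G y v i - qs G y v j| ≤ pw (lv G y v) / dw G y v := by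
    unfold qs
    rw [div_sub_div_same, abs_div, abs_of_pos hdw, div_le_div_iff_of_pos_right hdw]
    rw [abs_le]
    constructor <;> nlinarith [hWi.1, hWi.2, hWj.1, hWj.2]
  have hdeg : (0:ℝ) ≤ (G.degree v : ℝ) := Nat.cast_nonneg _
  calc (G.degree v : ℝ) * |qs G y v i - qs G y v j|
      ≤ (G.degree v : ℝ) * (pw (lv G y v) / dw G y v) := by
        exact mul_le_mul_of_nonneg_left hq hdeg
    _ ≤ 1 := by
        rw [← mul_div_assoc, div_le_one hdw]
        exact hdd

lemma isCRWStep_qs (hconn : G.Connected) [Nontrivial V] {v : V} (hv : v ≠ y) :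
    IsCRWStep G v (qs G y v) := by
  have hd0 : (0:ℝ) < (G.degree v : ℝ) := by exact_mod_cast degree_pos hconn v
  refine ⟨fun i j => 1/2 + (G.degree v : ℝ) * (qs G y v i - qs G y v j) / 2, ?_, ?_⟩
  · intro i hi j hj
    have h1 := abs_qs_diff hconn hv ((G.mem_neighborFinset v i).mp hi)
      ((G.mem_neighborFinset v j).mp hj)
    rw [← abs_of_nonneg hd0.le, ← abs_mul, abs_le] at h1
    refine ⟨by linarith [h1.1], by linarith [h1.2], by ring⟩
  · intro i
    by_cases hi : i ∈ G.neighborFinset v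
    · rw [if_pos hi]
      have e1 : ∀ j ∈ G.neighborFinset v,
          1/2 + (G.degree v : ℝ) * (qs G y v i - qs G y v j)/2
          = (1/2 + (G.degree v : ℝ) * qs G y v i/2) - ((G.degree v : ℝ)/2) * qs G y v j := by
        intro j _; ring
      rw [Finset.sum_congr rfl e1, Finset.sum_sub_distrib, Finset.sum_const, ← Finset.mul_sum,
        qs_sum_nbrs hconn v]
      have hcard : ((G.neighborFinset v).card : ℝ) = (G.degree v : ℝ) := by norm_cast
      rw [nsmul_eq_mul, hcard]
      field_simp
      ring
    · rw [if_neg hi]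
      exact qs_of_not_adj (fun h => hi ((G.mem_neighborFinset v i).mpr h))

lemma Wt_pos {a b : V} (h : G.Adj a b) : 0 < Wt G y a b := by
  unfold Wt; rw [if_pos h]; exact pw_pos _

variable (G y) in
/-- The weighted Laplacian, modified to be the identity at `y`. -/
noncomputable def Lop : (V → ℝ) →ₗ[ℝ] (V → ℝ) where
  toFun f := fun v => if v = y then f y else ∑ b, Wt G y v b * (f v - f b)
  map_add' f g := by
    funext v
    by_cases h : v = y
    · simp [h]
    · simp only [h, if_neg, Pi.add_apply, if_false]
      rw [← Finset.sum_add_distrib]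
      exact Finset.sum_congr rfl (fun b _ => by ring)
  map_smul' c f := by
    funext v
    by_cases h : v = y
    · simp [h]
    · simp only [h, if_neg, Pi.smul_apply, smul_eq_mul, RingHom.id_apply, if_false]
      rw [Finset.mul_sum]
      exact Finset.sum_congr rfl (fun b _ => by ring)

lemma Lop_apply_y (f : V → ℝ) : Lop G y f y = f y := by simp [Lop]

lemma Lop_apply_ne (f : V → ℝ) {v : V} (hv : v ≠ y) :
    Lop G y f v = ∑ b, Wt G y v b * (f v - f b) := by simp [Lop, hv]

lemma min_principle (hconn : G.Connected) (u c : V → ℝ) (hy : u y = 0)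
    (heq : ∀ v, v ≠ y → ∑ b, Wt G y v b * (u v - u b) = c v)
    (hc : ∀ v, 0 ≤ c v) : ∀ v, 0 ≤ u v := by
  obtain ⟨v0, _, hv0⟩ := Finset.exists_min_image Finset.univ u ⟨y, Finset.mem_univ y⟩
  by_cases h0 : 0 ≤ u v0
  · intro v; exact le_trans h0 (hv0 v (Finset.mem_univ v))
  push_neg at h0
  exfalso
  set A := Finset.univ.filter (fun v => u v = u v0) with hA
  obtain ⟨v1, hv1A, hv1min⟩ := Finset.exists_min_image A (lv G y)
    ⟨v0, by simp [hA]⟩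
  have hu1 : u v1 = u v0 := (Finset.mem_filter.mp hv1A).2
  have hv1y : v1 ≠ y := by
    rintro rfl; rw [hy] at hu1; linarith
  obtain ⟨hadj, hlv⟩ := pa_spec hconn hv1y
  have hpA : pa G y hconn v1 ∉ A := by
    intro hp
    have := hv1min _ hp
    omega
  have hup : u v0 < u (pa G y hconn v1) :=
    lt_of_le_of_ne (hv0 _ (Finset.mem_univ _))
      (fun he => hpA (by simp [hA, ← he]))
  have hsum : ∑ b, Wt G y v1 b * (u v1 - u b) < ∑ b : V, (0:ℝ) := by
    refine Finset.sum_lt_sum (fun b _ => ?_) ⟨pa G y hconn v1, Finset.mem_univ _, ?_⟩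
    · apply mul_nonpos_of_nonneg_of_nonpos (Wt_nonneg v1 b)
      have := hv0 b (Finset.mem_univ b)
      linarith [hu1]
    · apply mul_neg_of_pos_of_neg (Wt_pos hadj)
      linarith [hu1]
  rw [Finset.sum_const, smul_zero, heq v1 hv1y] at hsum
  exact (hc v1).not_gt hsum

lemma max_principle (hconn : G.Connected) (u : V → ℝ) (z : V) (hy : u y = 0) (hz : z ≠ y)
    (heq : ∀ v, v ≠ y → ∑ b, Wt G y v b * (u v - u b) = if v = z then 1 else 0) :
    ∀ v, u v ≤ u z := by
  have hnn : ∀ v, 0 ≤ u v := by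
    refine min_principle hconn u _ hy heq (fun v => ?_)
    split <;> norm_num
  obtain ⟨v0, _, hv0⟩ := Finset.exists_max_image Finset.univ u ⟨y, Finset.mem_univ y⟩
  by_cases h0 : u v0 ≤ u z
  · intro v; exact le_trans (hv0 v (Finset.mem_univ v)) h0
  push_neg at h0
  exfalso
  set A := Finset.univ.filter (fun v => u v = u v0) with hA
  obtain ⟨v1, hv1A, hv1min⟩ := Finset.exists_min_image A (lv G y)
    ⟨v0, by simp [hA]⟩
  have hu1 : u v1 = u v0 := (Finset.mem_filter.mp hv1A).2
  have hv1y : v1 ≠ y := by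
    rintro rfl
    rw [hy] at hu1
    exact absurd (hu1 ▸ hnn z) (not_le.mpr h0)
  have hv1z : v1 ≠ z := by
    rintro rfl
    exact absurd hu1 h0.ne
  obtain ⟨hadj, hlv⟩ := pa_spec hconn hv1y
  have hpA : pa G y hconn v1 ∉ A := by
    intro hp
    have := hv1min _ hp
    omega
  have hup : u (pa G y hconn v1) < u v0 :=
    lt_of_le_of_ne (hv0 _ (Finset.mem_univ _)) (fun he => hpA (by simp [hA, he]))
  have hsum : ∑ b : V, (0:ℝ) < ∑ b, Wt G y v1 b * (u v1 - u b) := by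
    refine Finset.sum_lt_sum (fun b _ => ?_) ⟨pa G y hconn v1, Finset.mem_univ _, ?_⟩
    · apply mul_nonneg (Wt_nonneg v1 b)
      have := hv0 b (Finset.mem_univ b)
      linarith [hu1]
    · apply mul_pos (Wt_pos hadj)
      linarith [hu1]
  rw [Finset.sum_const, smul_zero, heq v1 hv1y, if_neg hv1z] at hsum
  exact hsum.false

lemma Lop_injective (hconn : G.Connected) : Function.Injective (Lop G y) := by
  rw [injective_iff_map_eq_zero]
  intro f hf
  have hfy : f y = 0 := by
    have := congrFun hf y
    rwa [Lop_apply_y] at this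
  have heq : ∀ v, v ≠ y → ∑ b, Wt G y v b * (f v - f b) = 0 := by
    intro v hv
    have := congrFun hf v
    rwa [Lop_apply_ne f hv] at this
  have h1 : ∀ v, 0 ≤ f v := min_principle (G := G) (y := y) hconn f 0 hfy heq (fun v => le_refl 0)
  have h2 : ∀ v, 0 ≤ -f v := by
    refine min_principle (G := G) (y := y) hconn (-f) 0 (by simp [hfy]) (fun v hv => ?_) (fun v => le_refl 0)
    simp only [Pi.neg_apply, Pi.zero_apply]
    rw [← neg_eq_zero, ← Finset.sum_neg_distrib, ← heq v hv]
    exact Finset.sum_congr rfl (fun b _ => by ring)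
  have h3 : ∀ v, f v = 0 := by
    intro v
    have ha := h1 v
    have hb := h2 v
    linarith
  funext v
  exact h3 v

lemma Lop_surjective (hconn : G.Connected) : Function.Surjective (Lop G y) :=
  LinearMap.injective_iff_surjective.mp (Lop_injective hconn)

variable (G y) in
noncomputable def sol (hconn : G.Connected) (t : V → ℝ) : V → ℝ :=
  Classical.choose (Lop_surjective (G := G) (y := y) hconn t)

lemma sol_spec (hconn : G.Connected) (t : V → ℝ) : Lop G y (sol G y hconn t) = t :=
  Classical.choose_spec (Lop_surjective (G := G) (y := y) hconn t)

variable (G y) in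
/-- voltage for a unit current from `z` to `y`. -/
noncomputable def uz (hconn : G.Connected) (z : V) : V → ℝ :=
  sol G y hconn (fun v => if v = z then 1 else 0)

variable (G y) in
/-- hitting-time vector of the biased walk. -/
noncomputable def gv (hconn : G.Connected) : V → ℝ :=
  sol G y hconn (fun v => if v = y then 0 else dw G y v)

lemma uz_y (hconn : G.Connected) {z : V} (hz : z ≠ y) : uz G y hconn z y = 0 := by
  have := congrFun (sol_spec (G := G) (y := y) hconn (fun v => if v = z then 1 else 0)) y
  rw [Lop_apply_y] at this
  rw [uz, this, if_neg (Ne.symm hz)]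

lemma uz_eq (hconn : G.Connected) (z : V) {v : V} (hv : v ≠ y) :
    ∑ b, Wt G y v b * (uz G y hconn z v - uz G y hconn z b) = if v = z then 1 else 0 := by
  have := congrFun (sol_spec (G := G) (y := y) hconn (fun v => if v = z then 1 else 0)) v
  rwa [Lop_apply_ne _ hv] at this

lemma uz_nonneg (hconn : G.Connected) {z : V} (hz : z ≠ y) (v : V) :
    0 ≤ uz G y hconn z v := by
  refine min_principle (G := G) (y := y) hconn (uz G y hconn z) (fun v => if v = z then 1 else 0)
    (uz_y hconn hz) (fun v hv => uz_eq (G := G) (y := y) hconn z hv) (fun w => ?_) v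
  split <;> norm_num

lemma uz_le (hconn : G.Connected) {z : V} (hz : z ≠ y) (v : V) :
    uz G y hconn z v ≤ uz G y hconn z z :=
  max_principle (G := G) (y := y) hconn (uz G y hconn z) z (uz_y hconn hz) hz
    (fun v hv => uz_eq (G := G) (y := y) hconn z hv) v

lemma gv_y (hconn : G.Connected) : gv G y hconn y = 0 := by
  have := congrFun (sol_spec (G := G) (y := y) hconn (fun v => if v = y then 0 else dw G y v)) y
  rw [Lop_apply_y] at this
  rw [gv, this, if_pos rfl]

lemma gv_eq (hconn : G.Connected) {v : V} (hv : v ≠ y) :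
    ∑ b, Wt G y v b * (gv G y hconn v - gv G y hconn b) = dw G y v := by
  have := congrFun (sol_spec (G := G) (y := y) hconn (fun v => if v = y then 0 else dw G y v)) v
  rw [Lop_apply_ne _ hv] at this
  rwa [if_neg hv] at this

lemma gv_nonneg (hconn : G.Connected) (v : V) : 0 ≤ gv G y hconn v := by
  refine min_principle (G := G) (y := y) hconn (gv G y hconn) (fun w => dw G y w) (gv_y hconn)
    (fun w hw => gv_eq hconn hw) (fun w => dw_nonneg w) v

lemma g_decomp (hconn : G.Connected) :
    gv G y hconn = ∑ z ∈ Finset.univ.erase y, dw G y z • uz G y hconn z := by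
  refine Lop_injective (G := G) (y := y) hconn ?_
  rw [map_sum (Lop G y) (fun z => dw G y z • uz G y hconn z) (Finset.univ.erase y)]
  rw [gv, sol_spec]
  funext v
  simp only [Finset.sum_apply, Pi.smul_apply, map_smul, smul_eq_mul]
  have : ∀ z ∈ Finset.univ.erase y,
      dw G y z * Lop G y (uz G y hconn z) v = if v = z then dw G y z else 0 := by
    intro z hz
    rw [uz, sol_spec (G := G) (y := y)]
    split <;> simp_all
  rw [Finset.sum_congr rfl this]
  by_cases hv : v = y
  · subst hv
    rw [if_pos rfl]
    exact (Finset.sum_eq_zero (fun z hz =>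
      if_neg (fun h => (Finset.mem_erase.mp hz).1 h.symm))).symm
  · rw [if_neg hv, Finset.sum_eq_single v (fun z _ hzv => if_neg (fun h => hzv h.symm)) ?_,
      if_pos rfl]
    intro hv2
    exact absurd (Finset.mem_erase.mpr ⟨hv, Finset.mem_univ v⟩) hv2

/-- divergence of a flow. -/
noncomputable def fdiv (θ : V → V → ℝ) (p : V) : ℝ := ∑ q, θ p q

variable (G y) in
/-- energy of a flow (each edge counted twice). -/
noncomputable def En (θ : V → V → ℝ) : ℝ := ∑ p, ∑ q, θ p q ^ 2 * iw G y p q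

lemma En_nonneg (θ : V → V → ℝ) : 0 ≤ En G y θ :=
  Finset.sum_nonneg fun p _ => Finset.sum_nonneg fun q _ =>
    mul_nonneg (sq_nonneg _) (iw_nonneg p q)

lemma pairing (θ : V → V → ℝ) (hanti : ∀ a b, θ b a = -θ a b) (f : V → ℝ) :
    ∑ a, ∑ b, θ a b * (f a - f b) = 2 * ∑ a, f a * fdiv θ a := by
  have expand : ∀ a : V, ∑ b, θ a b * (f a - f b)
      = f a * fdiv θ a - ∑ b, θ a b * f b := by
    intro a
    rw [fdiv, Finset.mul_sum, ← Finset.sum_sub_distrib]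
    exact Finset.sum_congr rfl (fun b _ => by ring)
  rw [Finset.sum_congr rfl (fun a _ => expand a), Finset.sum_sub_distrib]
  have h2 : ∑ a, ∑ b, θ a b * f b = - ∑ a, f a * fdiv θ a := by
    rw [Finset.sum_comm, ← Finset.sum_neg_distrib]
    refine Finset.sum_congr rfl (fun b _ => ?_)
    rw [fdiv, Finset.mul_sum, ← Finset.sum_neg_distrib]
    refine Finset.sum_congr rfl (fun a _ => ?_)
    rw [hanti b a]
    ring
  rw [h2]
  ring

lemma thomson (hconn : G.Connected) {z : V} (hz : z ≠ y) (θ : V → V → ℝ)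
    (hanti : ∀ a b, θ b a = -θ a b) (hsupp : ∀ a b, ¬ G.Adj a b → θ a b = 0)
    (hdiv : ∀ a, fdiv θ a = (if a = z then 1 else 0) - (if a = y then 1 else 0)) :
    uz G y hconn z z ≤ En G y θ / 2 := by
  set u := uz G y hconn z with hu
  have huy : u y = 0 := uz_y hconn hz
  have hA : ∑ a, ∑ b, θ a b * (u a - u b) = 2 * u z := by
    rw [pairing θ hanti u]
    have h1 : ∑ a, u a * fdiv θ a = u z := by
      rw [Finset.sum_congr rfl (fun a (_ : a ∈ Finset.univ) => by rw [hdiv a])]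
      simp only [mul_sub, mul_ite, mul_one, mul_zero, Finset.sum_sub_distrib]
      rw [Finset.sum_ite_eq' Finset.univ z u, Finset.sum_ite_eq' Finset.univ y u]
      simp [huy]
    rw [h1]
  have hB : ∑ a, ∑ b, Wt G y a b * (u a - u b) ^ 2 = 2 * u z := by
    have e1 : ∀ a b : V, Wt G y a b * (u a - u b) ^ 2
        = (fun a b => Wt G y a b * (u a - u b)) a b * (u a - u b) := by
      intro a b; ring
    rw [Finset.sum_congr rfl (fun a _ => Finset.sum_congr rfl (fun b _ => e1 a b))]
    rw [pairing _ (fun a b => by rw [Wt_symm]; ring) u]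
    have h1 : ∑ a, u a * fdiv (fun a b => Wt G y a b * (u a - u b)) a = u z := by
      have e2 : ∀ a : V, u a * fdiv (fun a b => Wt G y a b * (u a - u b)) a
          = u a * (if a = z then 1 else 0) := by
        intro a
        by_cases hay : a = y
        · subst hay
          rw [huy, zero_mul, zero_mul]
        · rw [fdiv]
          rw [show ∑ b, (fun a b => Wt G y a b * (u a - u b)) a b
              = ∑ b, Wt G y a b * (u a - u b) from rfl]
          rw [uz_eq (G := G) (y := y) hconn z hay]
      rw [Finset.sum_congr rfl (fun a _ => e2 a)]
      simp only [mul_ite, mul_one, mul_zero]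
      rw [Finset.sum_ite_eq' Finset.univ z u]
      simp
    rw [h1]
  have hpt : ∀ a b : V, θ a b * (u a - u b)
      ≤ (θ a b ^ 2 * iw G y a b + Wt G y a b * (u a - u b) ^ 2) / 2 := by
    intro a b
    by_cases hab : G.Adj a b
    · have hW : Wt G y a b = pw (min (lv G y a) (lv G y b)) := if_pos hab
      have hi : iw G y a b = (pw (min (lv G y a) (lv G y b)))⁻¹ := if_pos hab
      set p := pw (min (lv G y a) (lv G y b)) with hp
      have hp0 : 0 < p := pw_pos _
      rw [hW, hi]
      have h2 : 2 * (θ a b * (u a - u b)) ≤ (θ a b ^ 2 + p ^ 2 * (u a - u b) ^ 2) / p := by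
        rw [le_div_iff₀ hp0]
        nlinarith [sq_nonneg (θ a b - p * (u a - u b))]
      have h3 : (θ a b ^ 2 + p ^ 2 * (u a - u b) ^ 2) / p
          = θ a b ^ 2 * p⁻¹ + p * (u a - u b) ^ 2 := by
        field_simp
      linarith [h2, h3 ▸ h2]
    · rw [hsupp a b hab, Wt_of_not_adj hab]
      have : iw G y a b = 0 := if_neg hab
      rw [this]
      norm_num
  have hsum : ∑ a, ∑ b, θ a b * (u a - u b)
      ≤ ∑ a, ∑ b, (θ a b ^ 2 * iw G y a b + Wt G y a b * (u a - u b) ^ 2) / 2 :=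
    Finset.sum_le_sum fun a _ => Finset.sum_le_sum fun b _ => hpt a b
  have hsplit : ∑ a, ∑ b, (θ a b ^ 2 * iw G y a b + Wt G y a b * (u a - u b) ^ 2) / 2
      = En G y θ / 2 + (∑ a, ∑ b, Wt G y a b * (u a - u b) ^ 2) / 2 := by
    rw [En, Finset.sum_div, Finset.sum_div, ← Finset.sum_add_distrib]
    refine Finset.sum_congr rfl (fun a _ => ?_)
    rw [Finset.sum_div, Finset.sum_div, ← Finset.sum_add_distrib]
    exact Finset.sum_congr rfl (fun b _ => by ring)
  rw [hA, hsplit, hB] at hsum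
  linarith

/-- unit flow along a single oriented edge. -/
def eF (a b : V) : V → V → ℝ := fun p q =>
  (if p = a ∧ q = b then 1 else 0) - (if p = b ∧ q = a then 1 else 0)

lemma eF_anti (a b p q : V) : eF a b q p = - eF a b p q := by
  unfold eF
  simp only [show (q = a ∧ p = b) ↔ (p = b ∧ q = a) from and_comm,
    show (q = b ∧ p = a) ↔ (p = a ∧ q = b) from and_comm]
  ring

lemma eF_div (a b : V) (p : V) :
    fdiv (eF a b) p = (if p = a then 1 else 0) - (if p = b then 1 else 0) := by
  unfold fdiv eF
  rw [Finset.sum_sub_distrib]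
  congr 1
  · by_cases hp : p = a <;> simp [hp, Finset.sum_ite_eq]
  · by_cases hp : p = b <;> simp [hp, Finset.sum_ite_eq]

lemma eF_supp {a b p q : V} (h : eF a b p q ≠ 0) :
    (p = a ∧ q = b) ∨ (p = b ∧ q = a) := by
  unfold eF at h
  by_cases h1 : p = a ∧ q = b
  · exact Or.inl h1
  · by_cases h2 : p = b ∧ q = a
    · exact Or.inr h2
    · exact absurd (by rw [if_neg h1, if_neg h2, sub_zero]) h

lemma eF_sq {a b : V} (hne : a ≠ b) (p q : V) :
    (eF a b p q) ^ 2 = (if p = a ∧ q = b then 1 else 0) + (if p = b ∧ q = a then 1 else 0) := by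
  unfold eF
  split_ifs with h1 h2 h2
  · exact absurd (h1.1.symm.trans h2.1) hne
  · norm_num
  · norm_num
  · norm_num

lemma iw_symm (a b : V) : iw G y a b = iw G y b a := by
  unfold iw
  rw [min_comm]
  by_cases h : G.Adj a b
  · rw [if_pos h, if_pos h.symm]
  · rw [if_neg h, if_neg (fun hb => h hb.symm)]

lemma ipw (k : ℕ) : (pw k)⁻¹ = (2:ℝ)^k :=
  (eq_inv_of_mul_eq_one_left (by rw [mul_comm]; exact pw_mul_two_pow k)).symm

lemma iw_adj {a b : V} (hab : G.Adj a b) :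
    iw G y a b = (2:ℝ) ^ (min (lv G y a) (lv G y b)) := by
  unfold iw
  rw [if_pos hab, ipw]

lemma sum_ind_mul (a b : V) (f : V → V → ℝ) :
    ∑ p, ∑ q, (if p = a ∧ q = b then (1:ℝ) else 0) * f p q = f a b := by
  have h1 : ∀ p : V, ∑ q, (if p = a ∧ q = b then (1:ℝ) else 0) * f p q
      = if p = a then f p b else 0 := by
    intro p
    by_cases hp : p = a
    · simp [hp, Finset.sum_ite_eq']
    · simp [hp]
  rw [Finset.sum_congr rfl (fun p _ => h1 p)]
  simp [Finset.sum_ite_eq']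

lemma En_eF {a b : V} (hab : G.Adj a b) :
    En G y (eF a b) = 2 * iw G y a b := by
  have hne : a ≠ b := G.ne_of_adj hab
  unfold En
  rw [Finset.sum_congr rfl (fun p _ => Finset.sum_congr rfl (fun q _ => by
    rw [eF_sq hne p q, add_mul]))]
  rw [Finset.sum_congr rfl (fun p (_ : p ∈ Finset.univ) => Finset.sum_add_distrib),
    Finset.sum_add_distrib]
  rw [sum_ind_mul a b (iw G y), sum_ind_mul b a (iw G y), iw_symm b a]
  ring

variable (G y) in
/-- flow along a descending path from `u` to `y` (with fuel `n`). -/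
noncomputable def pF (hconn : G.Connected) : ℕ → V → V → V → ℝ
  | 0, _ => fun _ _ => 0
  | n+1, u =>
      if u = y then fun _ _ => 0
      else fun p q => eF u (pa G y hconn u) p q + pF hconn n (pa G y hconn u) p q

lemma pF_anti (hconn : G.Connected) :
    ∀ (n : ℕ) (u p q : V), pF G y hconn n u q p = - pF G y hconn n u p q := by
  intro n
  induction n with
  | zero => intro u p q; simp [pF]
  | succ n ih =>
      intro u p q
      by_cases hu : u = y
      · simp [pF, hu]
      · simp only [pF, if_neg hu]
        rw [eF_anti, ih]
        ring

lemma pF_nonadj (hconn : G.Connected) :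
    ∀ (n : ℕ) (u p q : V), ¬ G.Adj p q → pF G y hconn n u p q = 0 := by
  intro n
  induction n with
  | zero => intro u p q _; simp [pF]
  | succ n ih =>
      intro u p q hpq
      by_cases hu : u = y
      · simp [pF, hu]
      · simp only [pF, if_neg hu]
        rw [ih _ p q hpq, add_zero]
        by_contra h
        rcases eF_supp h with ⟨rfl, rfl⟩ | ⟨rfl, rfl⟩
        · exact hpq (pa_spec hconn hu).1
        · exact hpq (pa_spec hconn hu).1.symm

lemma pF_supp_lv (hconn : G.Connected) :
    ∀ (n : ℕ) (u p q : V), pF G y hconn n u p q ≠ 0 →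
      lv G y p ≤ lv G y u ∧ lv G y q ≤ lv G y u := by
  intro n
  induction n with
  | zero => intro u p q h; exact absurd rfl h
  | succ n ih =>
      intro u p q h
      by_cases hu : u = y
      · rw [pF, if_pos hu] at h; exact absurd rfl h
      · rw [pF, if_neg hu] at h
        obtain ⟨hadj, hlv⟩ := pa_spec hconn hu
        by_cases he : eF u (pa G y hconn u) p q = 0
        · rw [he, zero_add] at h
          have := ih _ p q h
          omega
        · rcases eF_supp he with ⟨rfl, rfl⟩ | ⟨rfl, rfl⟩
          · omega
          · omega

lemma pF_div (hconn : G.Connected) :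
    ∀ (n : ℕ) (u : V), lv G y u ≤ n → ∀ p,
      fdiv (pF G y hconn n u) p = (if p = u then 1 else 0) - (if p = y then 1 else 0) := by
  intro n
  induction n with
  | zero =>
      intro u hu p
      have : u = y := eq_y_of_lv_eq_zero hconn (Nat.le_zero.mp hu)
      subst this
      simp [pF, fdiv]
  | succ n ih =>
      intro u hu p
      by_cases hy : u = y
      · subst hy; simp [pF, fdiv]
      · obtain ⟨hadj, hlv⟩ := pa_spec hconn hy
        have hfd : fdiv (pF G y hconn (n+1) u) p
            = fdiv (eF u (pa G y hconn u)) p + fdiv (pF G y hconn n (pa G y hconn u)) p := by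
          unfold fdiv
          rw [← Finset.sum_add_distrib]
          refine Finset.sum_congr rfl (fun q _ => ?_)
          rw [pF, if_neg hy]
        rw [hfd, eF_div, ih _ (by omega) p]
        ring

lemma pF_en (hconn : G.Connected) :
    ∀ (n : ℕ) (u : V), En G y (pF G y hconn n u) ≤ 2 * ((2:ℝ) ^ (lv G y u) - 1) := by
  intro n
  induction n with
  | zero =>
      intro u
      have h0 : En G y (pF G y hconn 0 u) = 0 := by
        unfold En
        refine Finset.sum_eq_zero (fun p _ => Finset.sum_eq_zero (fun q _ => ?_))
        simp [pF]
      rw [h0]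
      have : (1:ℝ) ≤ (2:ℝ) ^ (lv G y u) := one_le_pow₀ (by norm_num)
      linarith
  | succ n ih =>
      intro u
      by_cases hy : u = y
      · have h0 : En G y (pF G y hconn (n+1) u) = 0 := by
          unfold En
          refine Finset.sum_eq_zero (fun p _ => Finset.sum_eq_zero (fun q _ => ?_))
          simp [pF, hy]
        rw [h0]
        have : (1:ℝ) ≤ (2:ℝ) ^ (lv G y u) := one_le_pow₀ (by norm_num)
        linarith
      · obtain ⟨hadj, hlv⟩ := pa_spec hconn hy
        have hEeq : En G y (pF G y hconn (n+1) u)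
            = En G y (eF u (pa G y hconn u)) + En G y (pF G y hconn n (pa G y hconn u)) := by
          unfold En
          rw [← Finset.sum_add_distrib]
          refine Finset.sum_congr rfl (fun p _ => ?_)
          rw [← Finset.sum_add_distrib]
          refine Finset.sum_congr rfl (fun q _ => ?_)
          have hsp : pF G y hconn (n+1) u p q
              = eF u (pa G y hconn u) p q + pF G y hconn n (pa G y hconn u) p q := by
            rw [pF, if_neg hy]
          rw [hsp]
          have hdisj : eF u (pa G y hconn u) p q * pF G y hconn n (pa G y hconn u) p q = 0 := by
            by_cases he : eF u (pa G y hconn u) p q = 0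
            · rw [he, zero_mul]
            · by_cases hr : pF G y hconn n (pa G y hconn u) p q = 0
              · rw [hr, mul_zero]
              · exfalso
                have hs := pF_supp_lv hconn n _ p q hr
                rcases eF_supp he with ⟨rfl, rfl⟩ | ⟨rfl, rfl⟩
                · omega
                · omega
          linear_combination (2 * iw G y p q) * hdisj
        rw [hEeq]
        have h1 : En G y (eF u (pa G y hconn u)) = 2 * (2:ℝ) ^ (lv G y (pa G y hconn u)) := by
          rw [En_eF hadj, iw_adj hadj]
          congr 2
          omega
        have h2 := ih (pa G y hconn u)
        have h3 : (2:ℝ) ^ (lv G y u) = 2 * (2:ℝ) ^ (lv G y (pa G y hconn u)) := by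
          rw [← hlv, pow_succ]
          ring
        rw [h1, h3]
        linarith

lemma sq_ite (c : Prop) [Decidable c] : (if c then (1:ℝ) else 0)^2 = if c then 1 else 0 := by
  split <;> norm_num

variable (G y) in
noncomputable def Dset (z : V) : Finset V :=
  (G.neighborFinset z).filter (fun b => lv G y b < lv G y z)

lemma mem_Dset {z u : V} : u ∈ Dset G y z ↔ G.Adj z u ∧ lv G y u < lv G y z := by
  simp [Dset, G.mem_neighborFinset]

lemma Dset_card (z : V) : (Dset G y z).card = md G y z := rfl

lemma not_mem_Dset (z : V) : z ∉ Dset G y z := by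
  intro h
  exact absurd (mem_Dset.mp h).2 (lt_irrefl _)

lemma En_smul (c : ℝ) (θ : V → V → ℝ) :
    En G y (fun p q => c * θ p q) = c^2 * En G y θ := by
  unfold En
  rw [Finset.mul_sum]
  refine Finset.sum_congr rfl (fun p _ => ?_)
  rw [Finset.mul_sum]
  refine Finset.sum_congr rfl (fun q _ => ?_)
  ring

lemma En_sum_le {ι : Type*} (s : Finset ι) (f : ι → V → V → ℝ) :
    En G y (fun p q => ∑ u ∈ s, f u p q) ≤ (s.card : ℝ) * ∑ u ∈ s, En G y (f u) := by
  have hpt : ∀ p q : V, (∑ u ∈ s, f u p q)^2 * iw G y p q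
      ≤ (s.card : ℝ) * ∑ u ∈ s, (f u p q)^2 * iw G y p q := by
    intro p q
    have h1 : (∑ u ∈ s, f u p q)^2 ≤ (s.card : ℝ) * ∑ u ∈ s, (f u p q)^2 := by
      exact_mod_cast sq_sum_le_card_mul_sum_sq (s := s) (f := fun u => f u p q)
    calc (∑ u ∈ s, f u p q)^2 * iw G y p q
        ≤ ((s.card : ℝ) * ∑ u ∈ s, (f u p q)^2) * iw G y p q :=
          mul_le_mul_of_nonneg_right h1 (iw_nonneg p q)
      _ = (s.card : ℝ) * ∑ u ∈ s, (f u p q)^2 * iw G y p q := by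
          rw [mul_assoc, Finset.sum_mul]
  calc En G y (fun p q => ∑ u ∈ s, f u p q)
      ≤ ∑ p, ∑ q, (s.card : ℝ) * ∑ u ∈ s, (f u p q)^2 * iw G y p q :=
        Finset.sum_le_sum (fun p _ => Finset.sum_le_sum (fun q _ => hpt p q))
    _ = (s.card : ℝ) * ∑ p, ∑ q, ∑ u ∈ s, (f u p q)^2 * iw G y p q := by
        rw [Finset.mul_sum]
        exact Finset.sum_congr rfl (fun p _ => by rw [Finset.mul_sum])
    _ = (s.card : ℝ) * ∑ u ∈ s, En G y (f u) := by
        congr 1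
        unfold En
        rw [Finset.sum_congr rfl
          (fun p (_ : p ∈ (Finset.univ : Finset V)) => Finset.sum_comm), Finset.sum_comm]

lemma eF_sum_sq {z : V} {D : Finset V} (hzD : z ∉ D) (p q : V) :
    (∑ u ∈ D, eF z u p q)^2 = ∑ u ∈ D, (eF z u p q)^2 := by
  by_cases hp : p = z
  · by_cases hq : q = z
    · have he : ∀ u ∈ D, eF z u p q = 0 := by
        intro u _
        subst hp; subst hq
        simp [eF]
      rw [Finset.sum_congr rfl he, Finset.sum_const, smul_zero]
      rw [Finset.sum_congr rfl (fun u hu => by rw [he u hu])]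
      simp
    · have he : ∀ u ∈ D, eF z u p q = if q = u then 1 else 0 := by
        intro u _
        subst hp
        simp [eF, hq]
      have hL : ∑ u ∈ D, eF z u p q = if q ∈ D then 1 else 0 := by
        rw [Finset.sum_congr rfl he]
        exact Finset.sum_ite_eq D q (fun _ => (1:ℝ))
      have hR : ∑ u ∈ D, (eF z u p q)^2 = if q ∈ D then 1 else 0 := by
        have h2 : ∀ u ∈ D, (eF z u p q)^2 = if q = u then 1 else 0 := fun u hu => by
          rw [he u hu, sq_ite]
        rw [Finset.sum_congr rfl h2]
        exact Finset.sum_ite_eq D q (fun _ => (1:ℝ))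
      rw [hL, hR, sq_ite]
  · by_cases hq : q = z
    · have he : ∀ u ∈ D, eF z u p q = -(if p = u then 1 else 0) := by
        intro u _
        subst hq
        simp [eF, hp]
      have hL : ∑ u ∈ D, eF z u p q = -(if p ∈ D then 1 else 0) := by
        rw [Finset.sum_congr rfl he, Finset.sum_neg_distrib,
          Finset.sum_ite_eq D p (fun _ => (1:ℝ))]
      have hR : ∑ u ∈ D, (eF z u p q)^2 = if p ∈ D then 1 else 0 := by
        have h2 : ∀ u ∈ D, (eF z u p q)^2 = if p = u then 1 else 0 := fun u hu => by
          rw [he u hu, neg_sq, sq_ite]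
        rw [Finset.sum_congr rfl h2]
        exact Finset.sum_ite_eq D p (fun _ => (1:ℝ))
      rw [hL, hR, neg_sq, sq_ite]
    · have he : ∀ u ∈ D, eF z u p q = 0 := by
        intro u _
        simp [eF, hp, hq]
      rw [Finset.sum_congr rfl he, Finset.sum_const, smul_zero]
      rw [Finset.sum_congr rfl (fun u hu => by rw [he u hu])]
      simp

lemma En_sum_eF {z : V} {D : Finset V} (hzD : z ∉ D) :
    En G y (fun p q => ∑ u ∈ D, eF z u p q) = ∑ u ∈ D, En G y (eF z u) := by
  unfold En
  rw [Finset.sum_congr rfl (fun p (_ : p ∈ (Finset.univ : Finset V)) =>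
    Finset.sum_congr rfl (fun q _ => by rw [eF_sum_sq hzD p q, Finset.sum_mul]))]
  rw [Finset.sum_congr rfl
    (fun p (_ : p ∈ (Finset.univ : Finset V)) => Finset.sum_comm), Finset.sum_comm]

variable (G y) in
/-- the spread test flow from `z` to `y`. -/
noncomputable def sF (hconn : G.Connected) (z : V) : V → V → ℝ := fun p q =>
  ((md G y z : ℝ))⁻¹ * ∑ u ∈ Dset G y z,
    (eF z u p q + pF G y hconn (lv G y z) u p q)

lemma sF_anti (hconn : G.Connected) (z : V) (p q : V) :
    sF G y hconn z q p = - sF G y hconn z p q := by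
  unfold sF
  have h1 : ∀ u ∈ Dset G y z, eF z u q p + pF G y hconn (lv G y z) u q p
      = -(eF z u p q + pF G y hconn (lv G y z) u p q) := by
    intro u _
    rw [eF_anti, pF_anti]
    ring
  rw [Finset.sum_congr rfl h1, Finset.sum_neg_distrib]
  ring

lemma sF_nonadj (hconn : G.Connected) (z : V) (p q : V) (hpq : ¬ G.Adj p q) :
    sF G y hconn z p q = 0 := by
  unfold sF
  rw [Finset.sum_eq_zero, mul_zero]
  intro u hu
  rw [pF_nonadj hconn (lv G y z) u p q hpq, add_zero]
  by_contra h
  rcases eF_supp h with ⟨rfl, rfl⟩ | ⟨rfl, rfl⟩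
  · exact hpq (mem_Dset.mp hu).1
  · exact hpq (mem_Dset.mp hu).1.symm

lemma sF_div (hconn : G.Connected) [Nontrivial V] {z : V} (hz : z ≠ y) (a : V) :
    fdiv (sF G y hconn z) a = (if a = z then 1 else 0) - (if a = y then 1 else 0) := by
  have hm : (0:ℝ) < (md G y z : ℝ) := by exact_mod_cast md_pos hconn hz
  unfold fdiv sF
  rw [← Finset.mul_sum, Finset.sum_comm]
  have h1 : ∀ u ∈ Dset G y z,
      ∑ q, (eF z u a q + pF G y hconn (lv G y z) u a q)
      = (if a = z then 1 else 0) - (if a = y then 1 else 0) := by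
    intro u hu
    rw [Finset.sum_add_distrib]
    have h2 := eF_div z u a
    have h3 := pF_div hconn (lv G y z) u (le_of_lt (mem_Dset.mp hu).2) a
    unfold fdiv at h2 h3
    rw [h2, h3]
    ring
  rw [Finset.sum_congr rfl h1, Finset.sum_const, nsmul_eq_mul, Dset_card]
  rw [← mul_assoc, inv_mul_cancel₀ hm.ne', one_mul]

lemma En_sF (hconn : G.Connected) [Nontrivial V] {z : V} (hz : z ≠ y) :
    En G y (sF G y hconn z)
      ≤ 2 * ((2:ℝ)^(lv G y z - 1) * ((md G y z : ℝ))⁻¹ + (2:ℝ)^(lv G y z - 1) - 1) := by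
  have hm : (0:ℝ) < (md G y z : ℝ) := by exact_mod_cast md_pos hconn hz
  set k := lv G y z with hk
  set D := Dset G y z with hD
  set A : ℝ := (2:ℝ)^(k - 1) with hA
  have hA1 : (1:ℝ) ≤ A := one_le_pow₀ (by norm_num)
  set X : V → V → ℝ := fun p q => ∑ u ∈ D, eF z u p q with hX
  set Y : V → V → ℝ := fun p q => ∑ u ∈ D, pF G y hconn k u p q with hY
  have hsplit : sF G y hconn z = fun p q => ((md G y z : ℝ))⁻¹ * (X p q + Y p q) := by
    funext p q
    unfold sF
    rw [Finset.sum_add_distrib]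
  have hdisj : ∀ p q : V, X p q * Y p q = 0 := by
    intro p q
    by_cases hX0 : X p q = 0
    · rw [hX0, zero_mul]
    · have hY0 : Y p q = 0 := by
        obtain ⟨u, hu, hne⟩ := Finset.exists_ne_zero_of_sum_ne_zero hX0
        refine Finset.sum_eq_zero (fun w hw => ?_)
        by_contra h
        have hs := pF_supp_lv hconn k w p q h
        have hwlv : lv G y w < k := (mem_Dset.mp hw).2
        rcases eF_supp hne with ⟨rfl, _⟩ | ⟨_, rfl⟩
        · omega
        · omega
      rw [hY0, mul_zero]
  have hEX : En G y X ≤ (md G y z : ℝ) * (2 * A) := by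
    rw [hX, En_sum_eF (not_mem_Dset z)]
    have hterm : ∀ u ∈ D, En G y (eF z u) ≤ 2 * A := by
      intro u hu
      obtain ⟨hadj, hlt⟩ := mem_Dset.mp hu
      rw [En_eF hadj, iw_adj hadj]
      have : min (lv G y z) (lv G y u) = lv G y u := min_eq_right (le_of_lt hlt)
      rw [this, hA]
      have : (2:ℝ)^(lv G y u) ≤ (2:ℝ)^(k-1) :=
        pow_le_pow_right₀ (by norm_num) (by omega)
      linarith
    calc ∑ u ∈ D, En G y (eF z u) ≤ ∑ u ∈ D, 2 * A := Finset.sum_le_sum hterm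
      _ = (md G y z : ℝ) * (2 * A) := by
          rw [Finset.sum_const, nsmul_eq_mul, Dset_card]
  have hEY : En G y Y ≤ (md G y z : ℝ) * ((md G y z : ℝ) * (2 * (A - 1))) := by
    rw [hY]
    calc En G y (fun p q => ∑ u ∈ D, pF G y hconn k u p q)
        ≤ (D.card : ℝ) * ∑ u ∈ D, En G y (pF G y hconn k u) := En_sum_le D _
      _ ≤ (md G y z : ℝ) * ((md G y z : ℝ) * (2 * (A - 1))) := by
          rw [hD, Dset_card]
          refine mul_le_mul_of_nonneg_left ?_ hm.le
          have hterm : ∀ u ∈ D, En G y (pF G y hconn k u) ≤ 2 * (A - 1) := by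
            intro u hu
            refine le_trans (pF_en hconn k u) ?_
            have : (2:ℝ)^(lv G y u) ≤ A := by
              rw [hA]
              exact pow_le_pow_right₀ (by norm_num) (by
                have := (mem_Dset.mp hu).2
                omega)
            linarith
          calc ∑ u ∈ D, En G y (pF G y hconn k u) ≤ ∑ u ∈ D, 2 * (A - 1) :=
              Finset.sum_le_sum hterm
            _ = (md G y z : ℝ) * (2 * (A - 1)) := by
              rw [Finset.sum_const, nsmul_eq_mul, Dset_card]
  have hEadd : En G y (fun p q => X p q + Y p q) = En G y X + En G y Y := by
    unfold En
    rw [← Finset.sum_add_distrib]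
    refine Finset.sum_congr rfl (fun p _ => ?_)
    rw [← Finset.sum_add_distrib]
    refine Finset.sum_congr rfl (fun q _ => ?_)
    linear_combination (2 * iw G y p q) * hdisj p q
  rw [hsplit, En_smul, hEadd]
  set M : ℝ := (md G y z : ℝ) with hM
  have hgoal : (M⁻¹)^2 * (M * (2*A) + M * (M * (2 * (A-1)))) = 2 * (A * M⁻¹ + A - 1) := by
    field_simp
    ring
  calc (M⁻¹)^2 * (En G y X + En G y Y)
      ≤ (M⁻¹)^2 * (M * (2*A) + M * (M * (2 * (A-1)))) := by
        refine mul_le_mul_of_nonneg_left ?_ (by positivity)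
        exact add_le_add hEX hEY
    _ = 2 * (A * M⁻¹ + A - 1) := hgoal

lemma uz_zz_le (hconn : G.Connected) [Nontrivial V] {z : V} (hz : z ≠ y) :
    uz G y hconn z z
      ≤ (2:ℝ)^(lv G y z - 1) * ((md G y z : ℝ))⁻¹ + (2:ℝ)^(lv G y z - 1) - 1 := by
  refine le_trans (thomson hconn hz (sF G y hconn z) (sF_anti hconn z)
    (sF_nonadj hconn z) (sF_div hconn hz)) ?_
  have := En_sF hconn hz
  linarith

lemma sum_md_le (hconn : G.Connected) :
    ∑ z ∈ Finset.univ.erase y, md G y z ≤ G.edgeFinset.card := by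
  have h1 : ∑ z ∈ Finset.univ.erase y, md G y z ≤ ∑ z : V, md G y z :=
    Finset.sum_le_sum_of_subset (Finset.erase_subset y Finset.univ)
  refine le_trans h1 ?_
  have h2 : ∑ z : V, md G y z
      = ((Finset.univ : Finset V).sigma (fun z => Dset G y z)).card := by
    rw [Finset.card_sigma]
    exact Finset.sum_congr rfl (fun z _ => (Dset_card z).symm)
  rw [h2]
  refine Finset.card_le_card_of_injOn (fun p => s(p.1, p.2)) ?_ ?_
  · rintro ⟨a, b⟩ hp
    have hmem : b ∈ Dset G y a := (Finset.mem_sigma.mp hp).2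
    exact SimpleGraph.mem_edgeFinset.mpr ((G.mem_edgeSet).mpr (mem_Dset.mp hmem).1)
  · rintro ⟨a, b⟩ hp ⟨c, d⟩ hp' heq
    have hmem : b ∈ Dset G y a := (Finset.mem_sigma.mp hp).2
    have hmem' : d ∈ Dset G y c := (Finset.mem_sigma.mp hp').2
    have h3 : lv G y b < lv G y a := (mem_Dset.mp hmem).2
    have h4 : lv G y d < lv G y c := (mem_Dset.mp hmem').2
    have heq' : s(a, b) = s(c, d) := heq
    rcases Sym2.eq_iff.mp heq' with ⟨h5, h6⟩ | ⟨h5, h6⟩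
    · subst h5; subst h6; rfl
    · subst h5; subst h6
      omega

lemma sum_deg_erase (hconn : G.Connected) [Nontrivial V] :
    (∑ z ∈ Finset.univ.erase y, (G.degree z : ℝ))
      ≤ 2 * (G.edgeFinset.card : ℝ) - 1 := by
  have h1 : ∑ z ∈ Finset.univ.erase y, G.degree z + G.degree y = ∑ z : V, G.degree z :=
    Finset.sum_erase_add Finset.univ _ (Finset.mem_univ y)
  have h2 : ∑ z : V, G.degree z = 2 * G.edgeFinset.card :=
    SimpleGraph.sum_degrees_eq_twice_card_edges G
  have h3 : 1 ≤ G.degree y := degree_pos hconn y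
  have h4 : ∑ z ∈ Finset.univ.erase y, G.degree z ≤ 2 * G.edgeFinset.card - 1 := by omega
  calc (∑ z ∈ Finset.univ.erase y, (G.degree z : ℝ))
      = ((∑ z ∈ Finset.univ.erase y, G.degree z : ℕ) : ℝ) := by push_cast; rfl
    _ ≤ ((2 * G.edgeFinset.card - 1 : ℕ) : ℝ) := by exact_mod_cast h4
    _ ≤ 2 * (G.edgeFinset.card : ℝ) - 1 := by
        have h5 : 1 ≤ 2 * G.edgeFinset.card := by omega
        push_cast [Nat.cast_sub h5]
        ring_nf
        exact le_refl _

lemma ea_half {z : V} (hconn : G.Connected) (hz : z ≠ y) :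
    pw (lv G y z) * (2:ℝ)^(lv G y z - 1) = 1/2 := by
  have hk1 : 1 ≤ lv G y z := lv_pos hconn hz
  have hks : lv G y z - 1 + 1 = lv G y z := by omega
  have h1 : pw (lv G y z - 1) = 2 * pw (lv G y z) := by
    rw [pw_succ (lv G y z - 1), hks]
  have h2 : pw (lv G y z - 1) * (2:ℝ)^(lv G y z - 1) = 1 := pw_mul_two_pow _
  rw [h1] at h2
  linarith

lemma term_bounds (hconn : G.Connected) [Nontrivial V] {z : V} (hz : z ≠ y) :
    dw G y z * ((2:ℝ)^(lv G y z - 1) * ((md G y z : ℝ))⁻¹ + (2:ℝ)^(lv G y z - 1) - 1)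
      ≤ (G.degree z : ℝ) + (md G y z : ℝ)
    ∧ dw G y z * ((2:ℝ)^(lv G y z - 1) * ((md G y z : ℝ))⁻¹ + (2:ℝ)^(lv G y z - 1) - 1)
      ≤ (G.degree z : ℝ) + 1 := by
  set A : ℝ := (2:ℝ)^(lv G y z - 1) with hA
  set e : ℝ := pw (lv G y z) with he
  set m : ℝ := (md G y z : ℝ) with hm
  set dg : ℝ := (G.degree z : ℝ) with hdg
  have heA : e * A = 1/2 := ea_half hconn hz
  have hm1 : (1:ℝ) ≤ m := by
    rw [hm]; exact_mod_cast md_pos hconn hz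
  have hm0 : (0:ℝ) < m := by linarith
  have hmd : m ≤ dg := by
    rw [hm, hdg]; exact_mod_cast md_le_degree z
  have he0 : 0 < e := pw_pos _
  have hdw : dw G y z = (dg + m) * e := dw_eq hconn z
  have hkey : e * (A * m⁻¹ + A - 1) = m⁻¹/2 + 1/2 - e := by
    linear_combination (m⁻¹ + 1) * heA
  have hmi : m * m⁻¹ = 1 := mul_inv_cancel₀ hm0.ne'
  have hminv1 : m⁻¹ ≤ 1 := by
    rw [← hmi]
    nlinarith [inv_nonneg.mpr hm0.le]
  have hminv0 : 0 < m⁻¹ := inv_pos.mpr hm0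
  have ht : dw G y z * (A * m⁻¹ + A - 1) = (dg + m) * (m⁻¹/2 + 1/2 - e) := by
    rw [hdw, mul_assoc, hkey]
  constructor
  · rw [ht]
    nlinarith [he0, hm1, hmd, hminv1]
  · rw [ht]
    have key : 0 ≤ (m - 1) * (dg - m) := mul_nonneg (by linarith) (by linarith)
    have h5 : dg * m⁻¹ + m ≤ dg + 1 := by
      rw [← sub_nonneg]
      have expand : dg + 1 - (dg * m⁻¹ + m) = ((m - 1) * (dg - m)) * m⁻¹ := by
        field_simp
        ring
      rw [expand]
      exact mul_nonneg key hminv0.le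
    nlinarith [he0, hm1, hmd, hmi]

lemma gv_le_sum (hconn : G.Connected) [Nontrivial V] (x : V) :
    gv G y hconn x ≤ ∑ z ∈ Finset.univ.erase y,
      dw G y z * ((2:ℝ)^(lv G y z - 1) * ((md G y z : ℝ))⁻¹ + (2:ℝ)^(lv G y z - 1) - 1) := by
  have hdec := congrFun (g_decomp (G := G) (y := y) hconn) x
  rw [Finset.sum_apply] at hdec
  rw [hdec]
  refine Finset.sum_le_sum (fun z hzm => ?_)
  have hz : z ≠ y := (Finset.mem_erase.mp hzm).1
  have h1 : uz G y hconn z x ≤ uz G y hconn z z := uz_le hconn hz x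
  have h2 := uz_zz_le hconn hz
  calc (dw G y z • uz G y hconn z) x = dw G y z * uz G y hconn z x := rfl
    _ ≤ dw G y z * ((2:ℝ)^(lv G y z - 1) * ((md G y z : ℝ))⁻¹ + (2:ℝ)^(lv G y z - 1) - 1) :=
        mul_le_mul_of_nonneg_left (le_trans h1 h2) (dw_nonneg z)

lemma gv_lt_3E (hconn : G.Connected) [Nontrivial V] (x : V) :
    gv G y hconn x < 3 * (G.edgeFinset.card : ℝ) := by
  refine lt_of_le_of_lt (gv_le_sum hconn x) ?_
  have h1 : ∑ z ∈ Finset.univ.erase y,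
      dw G y z * ((2:ℝ)^(lv G y z - 1) * ((md G y z : ℝ))⁻¹ + (2:ℝ)^(lv G y z - 1) - 1)
      ≤ ∑ z ∈ Finset.univ.erase y, ((G.degree z : ℝ) + (md G y z : ℝ)) :=
    Finset.sum_le_sum (fun z hzm => (term_bounds hconn (Finset.mem_erase.mp hzm).1).1)
  refine lt_of_le_of_lt h1 ?_
  rw [Finset.sum_add_distrib]
  have h2 := sum_deg_erase (G := G) (y := y) hconn
  have h3 : ∑ z ∈ Finset.univ.erase y, (md G y z : ℝ) ≤ (G.edgeFinset.card : ℝ) := by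
    calc ∑ z ∈ Finset.univ.erase y, (md G y z : ℝ)
        = ((∑ z ∈ Finset.univ.erase y, md G y z : ℕ) : ℝ) := by push_cast; rfl
      _ ≤ (G.edgeFinset.card : ℝ) := by exact_mod_cast sum_md_le hconn
  linarith

lemma gv_lt_nsq (hconn : G.Connected) [Nontrivial V] (x : V) :
    gv G y hconn x < (Fintype.card V : ℝ)^2 := by
  refine lt_of_le_of_lt (gv_le_sum hconn x) ?_
  have h1 : ∑ z ∈ Finset.univ.erase y,
      dw G y z * ((2:ℝ)^(lv G y z - 1) * ((md G y z : ℝ))⁻¹ + (2:ℝ)^(lv G y z - 1) - 1)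
      ≤ ∑ z ∈ Finset.univ.erase y, ((G.degree z : ℝ) + 1) :=
    Finset.sum_le_sum (fun z hzm => (term_bounds hconn (Finset.mem_erase.mp hzm).1).2)
  refine lt_of_le_of_lt h1 ?_
  have hcard : (Finset.univ.erase y).card = Fintype.card V - 1 := by
    rw [Finset.card_erase_of_mem (Finset.mem_univ y), Finset.card_univ]
  have hn2 : 2 ≤ Fintype.card V := Fintype.one_lt_card
  have h2 : ∀ z ∈ Finset.univ.erase y, (G.degree z : ℝ) + 1 ≤ (Fintype.card V : ℝ) := by
    intro z _
    have := G.degree_lt_card_verts z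
    have : (G.degree z : ℝ) ≤ (Fintype.card V : ℝ) - 1 := by
      have h4 : G.degree z ≤ Fintype.card V - 1 := by omega
      calc (G.degree z : ℝ) ≤ ((Fintype.card V - 1 : ℕ) : ℝ) := by exact_mod_cast h4
        _ = (Fintype.card V : ℝ) - 1 := by
            push_cast [Nat.cast_sub (by omega : 1 ≤ Fintype.card V)]
            ring
    linarith
  calc ∑ z ∈ Finset.univ.erase y, ((G.degree z : ℝ) + 1)
      ≤ ∑ _z ∈ Finset.univ.erase y, (Fintype.card V : ℝ) := Finset.sum_le_sum h2
    _ = ((Fintype.card V : ℝ) - 1) * (Fintype.card V : ℝ) := by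
        rw [Finset.sum_const, nsmul_eq_mul, hcard]
        congr 1
        push_cast [Nat.cast_sub (by omega : 1 ≤ Fintype.card V)]
        ring
    _ < (Fintype.card V : ℝ)^2 := by
        have hnR : (2:ℝ) ≤ (Fintype.card V : ℝ) := by exact_mod_cast hn2
        have hexp : ((Fintype.card V : ℝ) - 1) * (Fintype.card V : ℝ)
            = (Fintype.card V : ℝ)^2 - (Fintype.card V : ℝ) := by ring
        rw [hexp]
        linarith

lemma gv_bellman (hconn : G.Connected) [Nontrivial V] {v : V} (hv : v ≠ y) :
    gv G y hconn v = 1 + ∑ b, qs G y v b * gv G y hconn b := by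
  have h1 := gv_eq (G := G) (y := y) hconn hv
  have hdw := dw_pos (G := G) (y := y) hconn v
  have h2 : ∑ b, Wt G y v b * (gv G y hconn v - gv G y hconn b)
      = dw G y v * gv G y hconn v - ∑ b, Wt G y v b * gv G y hconn b := by
    rw [Finset.sum_congr rfl (fun b (_ : b ∈ Finset.univ) =>
      (mul_sub (Wt G y v b) (gv G y hconn v) (gv G y hconn b))),
      Finset.sum_sub_distrib, ← Finset.sum_mul]
    rfl
  rw [h2] at h1
  have hS : ∑ b, qs G y v b * gv G y hconn b
      = (∑ b, Wt G y v b * gv G y hconn b) / dw G y v := by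
    rw [Finset.sum_div]
    exact Finset.sum_congr rfl (fun b _ => by unfold qs; ring)
  rw [hS]
  field_simp
  linarith

end CRWAux

/-- For any finite connected graph `G` on `n ≥ 2` vertices, the optimal choice-random-walk
expected hitting time between any two vertices is less than `3|E(G)|` and less than `n²`. -/
theorem crw_hitting_lt_three_edges_and_n_sq {V : Type*} [Fintype V] [DecidableEq V]
    [Nontrivial V] (G : SimpleGraph V) [DecidableRel G.Adj] (hconn : G.Connected) :
    ∀ x y : V,
      crwHitTime G x {y} < 3 * (G.edgeFinset.card : ℝ≥0∞) ∧
      crwHitTime G x {y} < ((Fintype.card V : ℝ≥0∞)) ^ 2 := by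
  intro x y
  classical
  set g : V → ℝ := CRWAux.gv G y hconn with hg
  have hmem : ENNReal.ofReal (g x) ∈ {t : ℝ≥0∞ | ∃ h : V → ℝ≥0∞, t = h x ∧
      (∀ v ∈ ({y} : Set V), h v = 0) ∧
      ∀ v ∉ ({y} : Set V), ∃ qv : V → ℝ, IsCRWStep G v qv ∧
        h v = 1 + ∑ w, ENNReal.ofReal (qv w) * h w} := by
    refine ⟨fun v => ENNReal.ofReal (g v), rfl, ?_, ?_⟩
    · intro v hv
      rw [Set.mem_singleton_iff] at hv
      subst hv
      show ENNReal.ofReal (CRWAux.gv G v hconn v) = 0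
      rw [CRWAux.gv_y (G := G) (y := v) hconn, ENNReal.ofReal_zero]
    · intro v hv
      rw [Set.mem_singleton_iff] at hv
      refine ⟨CRWAux.qs G y v, CRWAux.isCRWStep_qs (G := G) (y := y) hconn hv, ?_⟩
      have hb := CRWAux.gv_bellman (G := G) (y := y) hconn hv
      have hnn : ∀ b : V, 0 ≤ CRWAux.qs G y v b * g b :=
        fun b => mul_nonneg (CRWAux.qs_nonneg (G := G) (y := y) v b)
          (CRWAux.gv_nonneg (G := G) (y := y) hconn b)
      calc ENNReal.ofReal (g v)
          = ENNReal.ofReal (1 + ∑ b, CRWAux.qs G y v b * g b) := by rw [← hb]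
        _ = 1 + ENNReal.ofReal (∑ b, CRWAux.qs G y v b * g b) := by
            rw [ENNReal.ofReal_add (by norm_num) (Finset.sum_nonneg (fun b _ => hnn b)),
              ENNReal.ofReal_one]
        _ = 1 + ∑ b, ENNReal.ofReal (CRWAux.qs G y v b * g b) := by
            rw [ENNReal.ofReal_sum_of_nonneg (fun b _ => hnn b)]
        _ = 1 + ∑ b, ENNReal.ofReal (CRWAux.qs G y v b) * ENNReal.ofReal (g b) := by
            congr 1
            exact Finset.sum_congr rfl (fun b _ =>
              ENNReal.ofReal_mul (CRWAux.qs_nonneg (G := G) (y := y) v b))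
  have hle : crwHitTime G x {y} ≤ ENNReal.ofReal (g x) := sInf_le hmem
  have hE1 : 0 < G.edgeFinset.card := by
    obtain ⟨u, hu⟩ := CRWAux.exists_adj hconn y
    exact Finset.card_pos.mpr ⟨s(y, u), SimpleGraph.mem_edgeFinset.mpr ((G.mem_edgeSet).mpr hu)⟩
  constructor
  · refine lt_of_le_of_lt hle ?_
    have hreal := CRWAux.gv_lt_3E (G := G) (y := y) hconn x
    have hpos : (0:ℝ) < 3 * (G.edgeFinset.card : ℝ) := by
      have : (1:ℝ) ≤ (G.edgeFinset.card : ℝ) := by exact_mod_cast hE1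
      linarith
    calc ENNReal.ofReal (g x) < ENNReal.ofReal (3 * (G.edgeFinset.card : ℝ)) := by
          rw [ENNReal.ofReal_lt_ofReal_iff hpos]
          exact hreal
      _ = 3 * (G.edgeFinset.card : ℝ≥0∞) := by
          rw [ENNReal.ofReal_mul (by norm_num : (0:ℝ) ≤ 3), ENNReal.ofReal_natCast]
          norm_num
  · refine lt_of_le_of_lt hle ?_
    have hreal := CRWAux.gv_lt_nsq (G := G) (y := y) hconn x
    have hpos : (0:ℝ) < (Fintype.card V : ℝ)^2 := by
      have h2 : 2 ≤ Fintype.card V := Fintype.one_lt_card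
      have : (2:ℝ) ≤ (Fintype.card V : ℝ) := by exact_mod_cast h2
      nlinarith
    calc ENNReal.ofReal (g x) < ENNReal.ofReal ((Fintype.card V : ℝ)^2) := by
          rw [ENNReal.ofReal_lt_ofReal_iff hpos]
          exact hreal
      _ = ((Fintype.card V : ℝ≥0∞))^2 := by
          rw [ENNReal.ofReal_pow (Nat.cast_nonneg _), ENNReal.ofReal_natCast]
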